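/- The finally and globally operators satisfy: V(Fφ, uv^ω[t,∞)) = 1 iff there exists t' with t ≤ t' < |u|+|v| or |u| ≤ t' < |u|+|v| such that V(φ, uv^ω[t',∞)) = 1; equivalently, on an ultimately periodic word, Fφ holds at position t iff φ holds at some position in the finite set {t, …, |u|+|v|-1} ∪ {|u|, …, |u|+|v|-1}. -/

import Mathlib

def suffixW {A : Type*} (w : ℕ → A) (k : ℕ) : ℕ → A := fun n => w (n + k)

def upWord {A : Type*} (u v : List A) (hv : v ≠ []) : ℕ → A := fun n =>
  if h : n < u.length then u.get ⟨n, h⟩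
  else v.get ⟨(n - u.length) % v.length, Nat.mod_lt _ (List.length_pos_iff.mpr hv)⟩

inductive LTL (P : Type*) where
  | tt : LTL P
  | atom : P → LTL P
  | neg : LTL P → LTL P
  | disj : LTL P → LTL P → LTL P
  | next : LTL P → LTL P
  | untl : LTL P → LTL P → LTL P

def sat {P : Type*} : LTL P → (ℕ → Set P) → Prop
  | .tt, _ => True
  | .atom p, w => p ∈ w 0
  | .neg φ, w => ¬ sat φ w
  | .disj φ ψ, w => sat φ w ∨ sat ψ w
  | .next φ, w => sat φ (suffixW w 1)
  | .untl φ ψ, w => ∃ i, sat ψ (suffixW w i) ∧ ∀ j < i, sat φ (suffixW w j)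

/-- Fφ := true U φ. -/
def finF {P : Type*} (φ : LTL P) : LTL P := .untl .tt φ

lemma suffix_suffix {A : Type*} (w : ℕ → A) (t i : ℕ) :
    suffixW (suffixW w t) i = suffixW w (i + t) := by
  funext n; simp [suffixW, Nat.add_assoc]

lemma upWord_congr {A : Type*} (u v : List A) (hv : v ≠ []) (a b : ℕ)
    (ha : u.length ≤ a) (hb : u.length ≤ b)
    (hmod : (a - u.length) % v.length = (b - u.length) % v.length) :
    upWord u v hv a = upWord u v hv b := by
  simp only [upWord, dif_neg (Nat.not_lt.mpr ha), dif_neg (Nat.not_lt.mpr hb)]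
  congr 1
  exact Fin.ext hmod

lemma suffix_period {A : Type*} (u v : List A) (hv : v ≠ []) (m : ℕ)
    (hm : u.length ≤ m) :
    suffixW (upWord u v hv) m
      = suffixW (upWord u v hv) (u.length + (m - u.length) % v.length) := by
  funext n
  apply upWord_congr
  · omega
  · omega
  · have h1 : n + m - u.length = n + (m - u.length) := by omega
    have h2 : n + (u.length + (m - u.length) % v.length) - u.length
        = n + (m - u.length) % v.length := by omega
    rw [h1, h2, Nat.add_mod, Nat.add_mod n ((m - u.length) % v.length),
      Nat.mod_mod_of_dvd _ dvd_rfl]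

theorem sat_finally_finitary {P : Type*} (u v : List (Set P)) (hv : v ≠ [])
    (φ : LTL P) (t : ℕ) (ht : t < u.length + v.length) :
    sat (finF φ) (suffixW (upWord u v hv) t) ↔
      ∃ t', ((t ≤ t' ∧ t' < u.length + v.length) ∨
             (u.length ≤ t' ∧ t' < u.length + v.length)) ∧
        sat φ (suffixW (upWord u v hv) t') := by
  have hvpos : 0 < v.length := List.length_pos_iff.mpr hv
  constructor
  · rintro ⟨i, hi, -⟩
    rw [suffix_suffix] at hi
    set m := i + t with hm
    by_cases hcase : m < u.length + v.length
    · exact ⟨m, Or.inl ⟨by omega, hcase⟩, hi⟩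
    · refine ⟨u.length + (m - u.length) % v.length,
        Or.inr ⟨by omega, by have := Nat.mod_lt (m - u.length) hvpos; omega⟩, ?_⟩
      rw [← suffix_period u v hv m (by omega)]
      exact hi
  · rintro ⟨t', ht', hsat⟩
    rcases ht' with ⟨h1, h2⟩ | ⟨h1, h2⟩
    · exact ⟨t' - t, by rw [suffix_suffix]; convert hsat using 2; omega,
        fun _ _ => trivial⟩
    · refine ⟨t' + v.length - t, ?_, fun _ _ => trivial⟩
      rw [suffix_suffix]
      have heq : t' + v.length - t + t = t' + v.length := by omega
      rw [heq]
      have hp1 := suffix_period u v hv (t' + v.length) (by omega)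
      have hp2 := suffix_period u v hv t' h1
      have hmm : (t' + v.length - u.length) % v.length
          = (t' - u.length) % v.length := by
        have : t' + v.length - u.length = (t' - u.length) + v.length := by omega
        rw [this, Nat.add_mod_right]
      rw [hp1, hmm, ← hp2]
      exact hsat
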